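/- Let Δ be a reduced crystallographic root system with base Σ and positive roots Δ⁺. Fix Σ_k ⊆ Σ, let Δ_k be the set of roots that are integer linear combinations of elements of Σ_k, Δ_m = Δ \ Δ_k, and Δ_m⁺ = Δ_m ∩ Δ⁺. For δ ∈ Δ_m⁺ define S_δ = {α ∈ Δ_m⁺ : δ − α ∈ Δ_m⁺}, T_δ = {β ∈ Δ_m⁺ : β = δ or β − δ ∈ Δ⁺} ∪ {α ∈ Δ_m⁺ : δ − α ∈ Δ_k}, and W_δ = {α ∈ Δ : δ − α ∈ Δ}. Then (1/2)|S_δ| + |T_δ| = (1/2)|W_δ| + 1. -/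
import Mathlib


open scoped RealInnerProductSpace

/-- Let `Δ` be a reduced crystallographic root system with base
`Sig` and positive roots `Δpos`. For `Sk ⊆ Sig`, let `Δk` be the roots that are
integer combinations of `Sk`, `Δm = Δ \ Δk`, `Δmpos = Δm ∩ Δpos`. For `δ ∈ Δmpos`
let `S_δ = {α ∈ Δmpos : δ - α ∈ Δmpos}`,
`T_δ = {β ∈ Δmpos : β = δ ∨ β - δ ∈ Δpos} ∪ {α ∈ Δmpos : δ - α ∈ Δk}` and
`W_δ = {α ∈ Δ : δ - α ∈ Δ}`. Then `(1/2)|S_δ| + |T_δ| = (1/2)|W_δ| + 1`. -/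
theorem half_S_add_T_eq_half_W_add_one
    {E : Type*} [NormedAddCommGroup E] [InnerProductSpace ℝ E] [FiniteDimensional ℝ E]
    (Δ : Set E) (hfin : Δ.Finite)
    (hspan : Submodule.span ℝ Δ = ⊤)
    (h0 : (0 : E) ∉ Δ)
    (hred : ∀ α ∈ Δ, ∀ c : ℝ, c • α ∈ Δ → c • α = α ∨ c • α = -α)
    (hint : ∀ α ∈ Δ, ∀ β ∈ Δ, ∃ n : ℤ, 2 * ⟪β, α⟫ / ⟪α, α⟫ = (n : ℝ))
    (hrefl : ∀ α ∈ Δ, ∀ β ∈ Δ, β - (2 * ⟪β, α⟫ / ⟪α, α⟫) • α ∈ Δ)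
    (Sig : Finset E) (hSigΔ : (Sig : Set E) ⊆ Δ)
    (hSigind : LinearIndependent ℝ (fun x : {x // x ∈ Sig} => (x : E)))
    (hSigspan : Submodule.span ℝ (Sig : Set E) = Submodule.span ℝ Δ)
    (hbase : ∀ α ∈ Δ, ∃ c : E → ℤ,
      ((∀ σ ∈ Sig, 0 ≤ c σ) ∨ (∀ σ ∈ Sig, c σ ≤ 0)) ∧ α = ∑ σ ∈ Sig, c σ • σ)
    (Sk : Finset E) (hSk : Sk ⊆ Sig)
    (Δpos Δk Δm Δmpos : Set E)
    (hΔpos : Δpos = {α ∈ Δ | ∃ c : E → ℤ,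
      (∀ σ ∈ Sig, 0 ≤ c σ) ∧ α = ∑ σ ∈ Sig, c σ • σ})
    (hΔk : Δk = {α ∈ Δ | ∃ c : E → ℤ, α = ∑ σ ∈ Sk, c σ • σ})
    (hΔm : Δm = Δ \ Δk)
    (hΔmpos : Δmpos = Δm ∩ Δpos)
    (δ : E) (hδ : δ ∈ Δmpos)
    (S T W : Set E)
    (hS : S = {α ∈ Δmpos | δ - α ∈ Δmpos})
    (hT : T = {β ∈ Δmpos | β = δ ∨ β - δ ∈ Δpos} ∪ {α ∈ Δmpos | δ - α ∈ Δk})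
    (hW : W = {α ∈ Δ | δ - α ∈ Δ}) :
    (S.ncard : ℚ) / 2 + (T.ncard : ℚ) = (W.ncard : ℚ) / 2 + 1 := by
  classical
  -- membership characterizations
  have mP : ∀ x, x ∈ Δpos ↔ x ∈ Δ ∧ ∃ c : E → ℤ,
      (∀ σ ∈ Sig, 0 ≤ c σ) ∧ x = ∑ σ ∈ Sig, c σ • σ := by
    intro x; rw [hΔpos]; exact Iff.rfl
  have mK : ∀ x, x ∈ Δk ↔ x ∈ Δ ∧ ∃ c : E → ℤ, x = ∑ σ ∈ Sk, c σ • σ := by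
    intro x; rw [hΔk]; exact Iff.rfl
  have mMP : ∀ x, x ∈ Δmpos ↔ (x ∈ Δ ∧ x ∉ Δk) ∧ x ∈ Δpos := by
    intro x; rw [hΔmpos, hΔm]; exact Iff.rfl
  have mS : ∀ x, x ∈ S ↔ x ∈ Δmpos ∧ δ - x ∈ Δmpos := by
    intro x; rw [hS]; exact Iff.rfl
  have mT : ∀ x, x ∈ T ↔ ((x ∈ Δmpos ∧ (x = δ ∨ x - δ ∈ Δpos)) ∨ (x ∈ Δmpos ∧ δ - x ∈ Δk)) := by
    intro x; rw [hT]; exact Iff.rfl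
  have mW : ∀ x, x ∈ W ↔ x ∈ Δ ∧ δ - x ∈ Δ := by
    intro x; rw [hW]; exact Iff.rfl
  have hδmp := hδ
  rw [mMP] at hδmp
  obtain ⟨⟨hδΔ, hδk⟩, hδpos⟩ := hδmp
  have hzero : ∀ x ∈ Δ, x ≠ 0 := fun x hx h => h0 (h ▸ hx)
  have hsplit : ∀ (s : Finset E) (a b : E → ℤ),
      (∑ σ ∈ s, (a + b) σ • σ) = (∑ σ ∈ s, a σ • σ) + ∑ σ ∈ s, b σ • σ := by
    intro s a b
    rw [← Finset.sum_add_distrib]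
    exact Finset.sum_congr rfl (fun σ _ => by rw [Pi.add_apply, add_zsmul])
  -- negation of a root is a root
  have hneg : ∀ α ∈ Δ, -α ∈ Δ := by
    intro α hα
    have h1 : ⟪α, α⟫ ≠ (0 : ℝ) := by
      simpa [inner_self_eq_zero] using hzero α hα
    have h2 := hrefl α hα α hα
    have h3 : 2 * ⟪α, α⟫ / ⟪α, α⟫ = (2 : ℝ) := by field_simp
    rw [h3] at h2
    have h4 : α - (2 : ℝ) • α = -α := by
      rw [two_smul]; abel
    rwa [h4] at h2
  -- uniqueness of integer coefficients
  have huniq : ∀ c c' : E → ℤ, (∑ σ ∈ Sig, c σ • σ) = (∑ σ ∈ Sig, c' σ • σ) →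
      ∀ σ ∈ Sig, c σ = c' σ := by
    intro c c' h σ hσ
    have key := Fintype.linearIndependent_iff.mp hSigind
        (fun i => ((c i - c' i : ℤ) : ℝ))
    have hsum : ∑ i : {x // x ∈ Sig}, ((c (i : E) - c' (i : E) : ℤ) : ℝ) • (i : E) = 0 := by
      rw [Finset.univ_eq_attach,
        Finset.sum_attach Sig (fun x => ((c x - c' x : ℤ) : ℝ) • x)]
      have : ∀ x ∈ Sig, ((c x - c' x : ℤ) : ℝ) • x = c x • x - c' x • x := by
        intro x _
        rw [Int.cast_smul_eq_zsmul, sub_zsmul]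
        abel
      rw [Finset.sum_congr rfl this, Finset.sum_sub_distrib, h, sub_self]
    have h5 := key hsum ⟨σ, hσ⟩
    have h6 : (c σ - c' σ : ℤ) = 0 := by exact_mod_cast h5
    omega
  -- sum of positives is positive (if a root)
  have haddP : ∀ x ∈ Δpos, ∀ y ∈ Δpos, x + y ∈ Δ → x + y ∈ Δpos := by
    intro x hx y hy hxy
    rw [mP] at hx hy ⊢
    obtain ⟨-, c, hc, hcx⟩ := hx
    obtain ⟨-, d, hd, hdy⟩ := hy
    refine ⟨hxy, c + d, fun σ hσ => add_nonneg (hc σ hσ) (hd σ hσ), ?_⟩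
    rw [hsplit, ← hcx, ← hdy]
  -- x and -x cannot both be positive
  have hnn : ∀ x ∈ Δpos, -x ∈ Δpos → False := by
    intro x hx hnx
    obtain ⟨hxΔ, c, hc, hcx⟩ := (mP x).mp hx
    obtain ⟨-, d, hd, hdx⟩ := (mP (-x)).mp hnx
    have hsum : (∑ σ ∈ Sig, (c + d) σ • σ) = ∑ σ ∈ Sig, (fun _ => (0:ℤ)) σ • σ := by
      rw [hsplit, ← hcx, ← hdx]; simp
    have h := huniq _ _ hsum
    have hx0 : x = 0 := by
      rw [hcx]
      apply Finset.sum_eq_zero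
      intro σ hσ
      have h2 := h σ hσ
      have h3 := hc σ hσ
      have h4 := hd σ hσ
      simp only [Pi.add_apply] at h2
      have : c σ = 0 := by omega
      rw [this, zero_zsmul]
    exact hzero x hxΔ hx0
  -- a non-positive root has positive negative
  have hposneg : ∀ α ∈ Δ, α ∉ Δpos → -α ∈ Δpos := by
    intro α hα hnp
    obtain ⟨c, hc | hc, hrep⟩ := hbase α hα
    · exact absurd ((mP α).mpr ⟨hα, c, hc, hrep⟩) hnp
    · refine (mP _).mpr ⟨hneg α hα, -c,
        fun σ hσ => by simpa using hc σ hσ, ?_⟩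
      rw [hrep, ← Finset.sum_neg_distrib]
      exact Finset.sum_congr rfl (fun σ _ => by rw [Pi.neg_apply, neg_zsmul])
  -- δ is not a sum of two Δk-roots
  have hksum : ∀ α ∈ Δk, δ - α ∈ Δk → False := by
    intro α hαk hβk
    obtain ⟨hαΔ, a, ha⟩ := (mK α).mp hαk
    obtain ⟨-, b, hb⟩ := (mK (δ - α)).mp hβk
    refine hδk ((mK δ).mpr ⟨hδΔ, a + b, ?_⟩)
    rw [hsplit, ← ha, ← hb]; abel
  -- key lemma: a Δk-root minus δ is never positive
  have hkey : ∀ α ∈ Δk, α - δ ∈ Δpos → False := by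
    intro α hαk hpos
    obtain ⟨hαΔ, a, ha⟩ := (mK α).mp hαk
    obtain ⟨-, e, he, hee⟩ := (mP (α - δ)).mp hpos
    obtain ⟨-, d, hd, hdd⟩ := (mP δ).mp hδpos
    have h2 : (∑ σ ∈ Sig, (fun σ => if σ ∈ Sk then a σ else 0) σ • σ) = ∑ σ ∈ Sk, a σ • σ := by
      rw [← Finset.sum_subset hSk (fun x _ hx => by simp [hx])]
      exact Finset.sum_congr rfl (fun x hx => by simp [hx])
    have h3 : (∑ σ ∈ Sig, (e + d) σ • σ) = (α - δ) + δ := by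
      rw [hsplit, ← hee, ← hdd]
    have h1 : (∑ σ ∈ Sig, (e + d) σ • σ)
        = ∑ σ ∈ Sig, (fun σ => if σ ∈ Sk then a σ else 0) σ • σ := by
      rw [h3, h2, ← ha]; abel
    have h4 := huniq _ _ h1
    have h5 : ∀ σ ∈ Sig, σ ∉ Sk → d σ = 0 := by
      intro σ hσ hσk
      have h6 := h4 σ hσ
      simp only [Pi.add_apply, hσk, if_false] at h6
      have h7 := he σ hσ
      have h8 := hd σ hσ
      omega
    have h6 : δ = ∑ σ ∈ Sk, d σ • σ := by
      rw [hdd]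
      exact (Finset.sum_subset hSk (fun x hx hxk => by rw [h5 x hx hxk, zero_zsmul])).symm
    exact hδk ((mK δ).mpr ⟨hδΔ, d, h6⟩)
  -- set-theoretic facts
  have hΔposΔ : ∀ x ∈ Δpos, x ∈ Δ := fun x hx => ((mP x).mp hx).1
  have hΔkΔ : ∀ x ∈ Δk, x ∈ Δ := fun x hx => ((mK x).mp hx).1
  have hMPΔ : ∀ x ∈ Δmpos, x ∈ Δ := fun x hx => ((mMP x).mp hx).1.1
  have hSsubW : S ⊆ W := by
    intro x hx
    obtain ⟨h1, h2⟩ := (mS x).mp hx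
    exact (mW x).mpr ⟨hMPΔ x h1, hMPΔ _ h2⟩
  have hδnotW : δ ∉ W := by
    intro h
    have := ((mW δ).mp h).2
    rw [sub_self] at this
    exact h0 this
  -- S and T are disjoint
  have hST : ∀ x, x ∈ S → x ∈ T → False := by
    intro x hxS hxT
    obtain ⟨hx1, hx2⟩ := (mS x).mp hxS
    obtain ⟨⟨hxΔ, hxk⟩, hxp⟩ := (mMP x).mp hx1
    obtain ⟨⟨hyΔ, hyk⟩, hyp⟩ := (mMP (δ - x)).mp hx2
    rcases (mT x).mp hxT with ⟨-, heq | hsub⟩ | ⟨-, hk⟩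
    · subst heq
      rw [sub_self] at hyΔ
      exact h0 hyΔ
    · exact hnn _ hyp (by rw [neg_sub]; exact hsub)
    · exact hyk hk
  -- δ - x and x cannot both be in T
  have hTiT : ∀ x, x ∈ T → δ - x ∈ T → False := by
    intro x hxT hyT
    have hx1 : x ∈ Δmpos := by
      rcases (mT x).mp hxT with ⟨h, -⟩ | ⟨h, -⟩ <;> exact h
    have hy1 : δ - x ∈ Δmpos := by
      rcases (mT (δ - x)).mp hyT with ⟨h, -⟩ | ⟨h, -⟩ <;> exact h
    exact hST x ((mS x).mpr ⟨hx1, hy1⟩) hxT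
  -- the covering identity
  have hcover : W \ S = (T ∩ W) ∪ (fun a => δ - a) '' (T ∩ W) := by
    ext x
    simp only [Set.mem_diff, Set.mem_union, Set.mem_image, Set.mem_inter_iff]
    constructor
    · rintro ⟨hxW, hxS⟩
      obtain ⟨hxΔ, hyΔ⟩ := (mW x).mp hxW
      have hyW : δ - x ∈ W := (mW _).mpr ⟨hyΔ, by rw [sub_sub_cancel]; exact hxΔ⟩
      by_cases hxp : x ∈ Δpos
      · by_cases hyp : δ - x ∈ Δpos
        · by_cases hxk : x ∈ Δk
          · -- δ - x ∈ T, x = δ - (δ - x)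
            have hyknot : δ - x ∉ Δk := fun h => hksum x hxk h
            have hyMP : δ - x ∈ Δmpos := (mMP _).mpr ⟨⟨hyΔ, hyknot⟩, hyp⟩
            have hyT : δ - x ∈ T := (mT _).mpr (Or.inr ⟨hyMP, by rw [sub_sub_cancel]; exact hxk⟩)
            exact Or.inr ⟨δ - x, ⟨hyT, hyW⟩, by abel⟩
          · by_cases hyk : δ - x ∈ Δk
            · have hxMP : x ∈ Δmpos := (mMP _).mpr ⟨⟨hxΔ, hxk⟩, hxp⟩
              exact Or.inl ⟨(mT _).mpr (Or.inr ⟨hxMP, hyk⟩), hxW⟩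
            · exfalso
              apply hxS
              exact (mS x).mpr ⟨(mMP _).mpr ⟨⟨hxΔ, hxk⟩, hxp⟩, (mMP _).mpr ⟨⟨hyΔ, hyk⟩, hyp⟩⟩
        · -- x positive, δ - x not positive
          have hnyp : x - δ ∈ Δpos := by
            have := hposneg _ hyΔ hyp
            rwa [neg_sub] at this
          have hxk : x ∉ Δk := fun h => hkey x h hnyp
          have hxMP : x ∈ Δmpos := (mMP _).mpr ⟨⟨hxΔ, hxk⟩, hxp⟩
          exact Or.inl ⟨(mT _).mpr (Or.inl ⟨hxMP, Or.inr hnyp⟩), hxW⟩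
      · by_cases hyp : δ - x ∈ Δpos
        · -- δ - x positive, x not positive
          have hnyp : (δ - x) - δ ∈ Δpos := by
            have := hposneg _ hxΔ hxp
            have h7 : (δ - x) - δ = -x := by abel
            rwa [h7]
          have hyk : δ - x ∉ Δk := fun h => hkey _ h hnyp
          have hyMP : δ - x ∈ Δmpos := (mMP _).mpr ⟨⟨hyΔ, hyk⟩, hyp⟩
          have hyT : δ - x ∈ T := (mT _).mpr (Or.inl ⟨hyMP, Or.inr hnyp⟩)
          exact Or.inr ⟨δ - x, ⟨hyT, hyW⟩, by abel⟩
        · -- both not positive: contradiction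
          exfalso
          have h1 := hposneg _ hxΔ hxp
          have h2 := hposneg _ hyΔ hyp
          have h3 : -x + -(δ - x) ∈ Δ := by
            have : -x + -(δ - x) = -δ := by abel
            rw [this]; exact hneg δ hδΔ
          have h4 := haddP _ h1 _ h2 h3
          have h5 : -x + -(δ - x) = -δ := by abel
          rw [h5] at h4
          exact hnn δ hδpos h4
    · rintro (⟨hxT, hxW⟩ | ⟨y, ⟨hyT, hyW⟩, rfl⟩)
      · exact ⟨hxW, fun h => hST x h hxT⟩
      · obtain ⟨hyΔ, hzΔ⟩ := (mW y).mp hyW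
        refine ⟨(mW _).mpr ⟨hzΔ, by rw [sub_sub_cancel]; exact hyΔ⟩, ?_⟩
        intro hS'
        obtain ⟨h1, h2⟩ := (mS _).mp hS'
        rw [sub_sub_cancel] at h2
        exact hST y ((mS y).mpr ⟨h2, h1⟩) hyT
  -- disjointness
  have hdisj : Disjoint (T ∩ W) ((fun a => δ - a) '' (T ∩ W)) := by
    rw [Set.disjoint_left]
    rintro x ⟨hxT, -⟩ ⟨y, ⟨hyT, -⟩, rfl⟩
    exact hTiT y hyT (by simpa using hxT)
  -- T = insert δ (T ∩ W)
  have hTeq : T = insert δ (T ∩ W) := by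
    ext x
    simp only [Set.mem_insert_iff, Set.mem_inter_iff]
    constructor
    · intro hxT
      by_cases hx : x = δ
      · exact Or.inl hx
      · refine Or.inr ⟨hxT, ?_⟩
        rcases (mT x).mp hxT with ⟨h1, heq | hsub⟩ | ⟨h1, hk⟩
        · exact absurd heq hx
        · refine (mW x).mpr ⟨hMPΔ x h1, ?_⟩
          have := hneg _ (hΔposΔ _ hsub)
          rwa [neg_sub] at this
        · exact (mW x).mpr ⟨hMPΔ x h1, hΔkΔ _ hk⟩
    · rintro (hx | ⟨h1, -⟩)
      · rw [hx]; exact (mT δ).mpr (Or.inl ⟨hδ, Or.inl rfl⟩)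
      · exact h1
  -- finiteness
  have hWfin : W.Finite := hfin.subset (fun x hx => ((mW x).mp hx).1)
  have hTfin : T.Finite := hfin.subset (fun x hx => by
    rcases (mT x).mp hx with ⟨h, -⟩ | ⟨h, -⟩ <;> exact hMPΔ x h)
  have hSfin : S.Finite := hWfin.subset hSsubW
  have hT'fin : (T ∩ W).Finite := hTfin.inter_of_left W
  have hinj : Function.Injective (fun a : E => δ - a) := by
    intro a b h
    simpa using h
  -- cardinalities
  have hWcard : W.ncard = S.ncard + 2 * (T ∩ W).ncard := by
    have h1 := Set.ncard_diff_add_ncard_of_subset hSsubW hWfin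
    rw [hcover] at h1
    rw [Set.ncard_union_eq hdisj hT'fin (hT'fin.image _),
      Set.ncard_image_of_injective _ hinj] at h1
    omega
  have hTcard : T.ncard = (T ∩ W).ncard + 1 := by
    conv_lhs => rw [hTeq]
    exact Set.ncard_insert_of_notMem (fun h => hδnotW h.2) hT'fin
  rw [hWcard, hTcard]
  push_cast
  ring
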